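/- arXiv:1711.06730 — 3 statements merged into one kernel-verified Lean document; each statement's English description precedes it below -/
import Mathlib

section
/- Let u : ℝ^n → ℝ be a nontrivial C^1 function, periodic with respect to Ω = [-π,π]^n, with gradient also periodic and square-integrable on Ω. Let ε > 0 and suppose λ > (∫_Ω |∇u|^2 dy)/(∫_Ω u^2 dy). Then there exists x ∈ ℝ^n such that λ ∫_{ℝ^n} u(x+y)^2 G_0(y,ε) dy > ∫_{ℝ^n} |∇u(x+y)|^2 G_0(y,ε) dy, where G_0(y,ε) = ε^{-n/2} e^{-|y|^2/(4ε)}. -/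
open MeasureTheory Real Set Function

noncomputable def latHom (n : ℕ) : (Fin n → ℤ) →+ EuclideanSpace ℝ (Fin n) where
  toFun k := (WithLp.equiv 2 (Fin n → ℝ)).symm (fun i => 2 * π * (k i : ℝ))
  map_zero' := by ext i; simp
  map_add' k l := by
    ext i
    simp only [WithLp.equiv_symm_apply, PiLp.toLp_apply, PiLp.add_apply, Pi.add_apply]
    push_cast; ring

lemma latHom_apply (n : ℕ) (k : Fin n → ℤ) (i : Fin n) :
    (latHom n k) i = 2 * π * (k i : ℝ) := rfl

noncomputable def lat (n : ℕ) : AddSubgroup (EuclideanSpace ℝ (Fin n)) := (latHom n).range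

instance (n : ℕ) : Countable (lat n) := by
  have : Countable (Set.range (latHom n)) := (Set.countable_range _).to_subtype
  exact this

lemma shift_mem (t : ℝ) :
    -π ≤ t + 2*π*(⌈(-π - t)/(2*π)⌉ : ℤ) ∧ t + 2*π*(⌈(-π - t)/(2*π)⌉ : ℤ) < π := by
  have h2 : (0:ℝ) < 2*π := by positivity
  have h1 := Int.le_ceil ((-π - t)/(2*π))
  have h3 := Int.ceil_lt_add_one ((-π - t)/(2*π))
  rw [div_le_iff₀ h2] at h1
  have h3' : ((⌈(-π - t)/(2*π)⌉:ℝ) - 1) * (2*π) < -π - t := by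
    rw [← lt_div_iff₀ h2]; linarith
  constructor
  · nlinarith
  · nlinarith

lemma shift_unique {t : ℝ} {a b : ℤ} (ha : -π ≤ t + 2*π*a ∧ t + 2*π*a < π)
    (hb : -π ≤ t + 2*π*b ∧ t + 2*π*b < π) : a = b := by
  have h2 : (0:ℝ) < 2*π := by positivity
  have h1 : (a:ℝ) < b + 1 := by nlinarith
  have h2' : (b:ℝ) < a + 1 := by nlinarith
  have : a < b + 1 := by exact_mod_cast h1
  have : b < a + 1 := by exact_mod_cast h2'
  omega
section
variable (n : ℕ)

def Dcube : Set (EuclideanSpace ℝ (Fin n)) := {y | ∀ i, -π ≤ y i ∧ y i < π}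
def Kcube : Set (EuclideanSpace ℝ (Fin n)) := {y | ∀ i, -π ≤ y i ∧ y i ≤ π}

lemma coord_measurable (i : Fin n) : Measurable (fun y : EuclideanSpace ℝ (Fin n) => y i) :=
  (measurable_pi_apply i).comp (MeasurableEquiv.toLp 2 (Fin n → ℝ)).symm.measurable

lemma Dcube_measurable : MeasurableSet (Dcube n) := by
  have : Dcube n = ⋂ i, (fun y : EuclideanSpace ℝ (Fin n) => y i) ⁻¹' (Ico (-π) π) := by
    ext y; simp [Dcube, Set.mem_Ico]
  rw [this]
  exact MeasurableSet.iInter fun i => (coord_measurable n i) measurableSet_Ico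

lemma Kcube_measurable : MeasurableSet (Kcube n) := by
  have : Kcube n = ⋂ i, (fun y : EuclideanSpace ℝ (Fin n) => y i) ⁻¹' (Icc (-π) π) := by
    ext y; simp [Kcube, Set.mem_Icc]
  rw [this]
  exact MeasurableSet.iInter fun i => (coord_measurable n i) measurableSet_Icc

lemma Kcube_compact : IsCompact (Kcube n) := by
  have h : Kcube n = (EuclideanSpace.equiv (Fin n) ℝ).toHomeomorph ⁻¹'
      (Set.univ.pi fun _ : Fin n => Icc (-π) π) := by
    ext y
    simp [Kcube, Pi.le_def, forall_and]
  rw [h]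
  exact (EuclideanSpace.equiv (Fin n) ℝ).toHomeomorph.isCompact_preimage.mpr
    (isCompact_univ_pi fun _ => isCompact_Icc)

lemma hyperplane_null (i : Fin n) (c : ℝ) :
    volume {y : EuclideanSpace ℝ (Fin n) | y i = c} = 0 := by
  have h : {y : EuclideanSpace ℝ (Fin n) | y i = c}
      = (MeasurableEquiv.toLp 2 (Fin n → ℝ)).symm ⁻¹' {f : Fin n → ℝ | f i = c} := rfl
  rw [h, (EuclideanSpace.volume_preserving_symm_measurableEquiv_toLp (Fin n)).measure_preimage]
  · rw [MeasureTheory.volume_pi]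
    exact Measure.pi_hyperplane (fun _ => (volume : Measure ℝ)) i c
  · exact (measurableSet_eq_fun (measurable_pi_apply i) measurable_const).nullMeasurableSet

lemma Kcube_ae_eq_Dcube : (Kcube n : Set (EuclideanSpace ℝ (Fin n))) =ᵐ[volume] Dcube n := by
  rw [Filter.eventuallyEq_set]
  have h1 : {y : EuclideanSpace ℝ (Fin n) | ¬ (y ∈ Kcube n ↔ y ∈ Dcube n)}
      ⊆ ⋃ i, {y : EuclideanSpace ℝ (Fin n) | y i = π} := by
    intro y hy
    simp only [Set.mem_setOf_eq, Kcube, Dcube] at hy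
    by_cases hK : ∀ i, -π ≤ y i ∧ y i ≤ π
    · have hD : ¬ ∀ i, -π ≤ y i ∧ y i < π := fun h => hy ⟨fun _ => h, fun _ => hK⟩
      push_neg at hD
      obtain ⟨i, hi⟩ := hD
      have := hK i
      refine Set.mem_iUnion.mpr ⟨i, ?_⟩
      simp only [Set.mem_setOf_eq]
      exact le_antisymm this.2 (hi this.1)
    · have hD : ¬ ∀ i, -π ≤ y i ∧ y i < π := fun h => hK (fun i => ⟨(h i).1, (h i).2.le⟩)
      exact absurd ⟨fun h => absurd h hK, fun h => absurd h hD⟩ hy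
  rw [ae_iff]
  exact measure_mono_null h1 (measure_iUnion_null fun i => hyperplane_null n i π)
end

section
variable (n : ℕ)

lemma lat_vadd (g : lat n) (x : EuclideanSpace ℝ (Fin n)) : g +ᵥ x = ↑g + x := rfl

lemma isFD : IsAddFundamentalDomain (lat n) (Dcube n) volume := by
  apply IsAddFundamentalDomain.mk' (Dcube_measurable n).nullMeasurableSet
  intro x
  refine ⟨⟨latHom n (fun i => ⌈(-π - x i)/(2*π)⌉), ⟨_, rfl⟩⟩, ?_, ?_⟩
  · intro i
    rw [lat_vadd]
    have : (↑(⟨latHom n (fun i => ⌈(-π - x i)/(2*π)⌉), ⟨_, rfl⟩⟩ : lat n) + x) i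
        = x i + 2*π*(⌈(-π - x i)/(2*π)⌉ : ℤ) := by
      simp only [PiLp.add_apply, latHom_apply]
      ring
    rw [this]
    exact shift_mem (x i)
  · rintro ⟨g, k', rfl⟩ hmem
    have hk : ∀ i, k' i = ⌈(-π - x i)/(2*π)⌉ := by
      intro i
      have h1 := hmem i
      rw [lat_vadd] at h1
      have h2 : (latHom n k' + x) i = x i + 2*π*(k' i : ℝ) := by
        simp only [PiLp.add_apply, latHom_apply]; ring
      rw [h2] at h1
      exact shift_unique h1 (shift_mem (x i))
    have hk' : k' = fun i => ⌈(-π - x i)/(2*π)⌉ := funext hk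
    subst hk'
    rfl

lemma isFD_translate (v : EuclideanSpace ℝ (Fin n)) :
    IsAddFundamentalDomain (lat n) ((fun x => x - v) ⁻¹' (Dcube n)) volume := by
  refine (isFD n).preimage_of_equiv
    (measurePreserving_sub_right volume v).quasiMeasurePreserving
    (e := id) Function.bijective_id (fun g x => ?_)
  show (↑g + x) - v = ↑g + (x - v)
  abel

lemma shift_integral (f : EuclideanSpace ℝ (Fin n) → ℝ)
    (hper : ∀ (g : lat n) (x : EuclideanSpace ℝ (Fin n)), f (↑g + x) = f x)
    (y : EuclideanSpace ℝ (Fin n)) :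
    ∫ x in Kcube n, f (x + y) = ∫ x in Kcube n, f x := by
  have hper' : ∀ (g : lat n) (x : EuclideanSpace ℝ (Fin n)), f (g +ᵥ x) = f x := hper
  calc ∫ x in Kcube n, f (x + y)
      = ∫ x in Dcube n, f (x + y) := setIntegral_congr_set (Kcube_ae_eq_Dcube n)
    _ = ∫ x in (fun z => z - y) ⁻¹' (Dcube n), f x := by
        have h1 : MeasurePreserving (fun x : EuclideanSpace ℝ (Fin n) => x + y)
            volume volume := measurePreserving_add_right volume y
        have h2 : MeasurableEmbedding (fun x : EuclideanSpace ℝ (Fin n) => x + y) :=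
          (MeasurableEquiv.addRight y).measurableEmbedding
        have h3 : (fun x : EuclideanSpace ℝ (Fin n) => x + y) ⁻¹'
            ((fun z => z - y) ⁻¹' (Dcube n)) = Dcube n := by
          ext z; simp [add_sub_cancel_right]
        rw [← h1.setIntegral_preimage_emb h2 f ((fun z => z - y) ⁻¹' (Dcube n)), h3]
    _ = ∫ x in Dcube n, f x := (isFD_translate n y).setIntegral_eq (isFD n) hper'
    _ = ∫ x in Kcube n, f x := (setIntegral_congr_set (Kcube_ae_eq_Dcube n)).symm

end

section
variable (n : ℕ)

lemma exists_lat_translate (x : EuclideanSpace ℝ (Fin n)) :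
    ∃ g : lat n, ↑g + x ∈ Kcube n := by
  refine ⟨⟨latHom n (fun i => ⌈(-π - x i)/(2*π)⌉), ⟨_, rfl⟩⟩, fun i => ?_⟩
  have h2 : (latHom n (fun i => ⌈(-π - x i)/(2*π)⌉) + x) i
      = x i + 2*π*((⌈(-π - x i)/(2*π)⌉ : ℤ) : ℝ) := by
    simp only [PiLp.add_apply, latHom_apply]; ring
  rw [h2]
  exact ⟨(shift_mem (x i)).1, (shift_mem (x i)).2.le⟩

lemma zero_mem_Kcube : (0 : EuclideanSpace ℝ (Fin n)) ∈ Kcube n := by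
  intro i
  have : (0 : EuclideanSpace ℝ (Fin n)) i = 0 := rfl
  rw [this]
  constructor <;> linarith [pi_pos]

lemma exists_bound (f : EuclideanSpace ℝ (Fin n) → ℝ) (hc : Continuous f)
    (hper : ∀ (g : lat n) (x : EuclideanSpace ℝ (Fin n)), f (↑g + x) = f x) :
    ∃ C, ∀ x, |f x| ≤ C := by
  obtain ⟨z, _, hz⟩ := (Kcube_compact n).exists_isMaxOn ⟨0, zero_mem_Kcube n⟩
    (hc.abs.continuousOn)
  refine ⟨|f z|, fun x => ?_⟩
  obtain ⟨g, hg⟩ := exists_lat_translate n x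
  calc |f x| = |f (↑g + x)| := by rw [hper g x]
    _ ≤ |f z| := hz hg

lemma integral_sq_pos (v : EuclideanSpace ℝ (Fin n) → ℝ) (hc : Continuous v)
    (hnz : ∃ x, v x ≠ 0)
    (hper : ∀ (g : lat n) (x : EuclideanSpace ℝ (Fin n)), v (↑g + x) = v x) :
    0 < ∫ y in Kcube n, v y ^ 2 := by
  have hint : IntegrableOn (fun y => v y ^ 2) (Kcube n) :=
    ((hc.pow 2).continuousOn).integrableOn_compact (Kcube_compact n)
  rcases lt_or_eq_of_le (setIntegral_nonneg (Kcube_measurable n)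
    (fun y _ => sq_nonneg (v y))) with h | h
  · exact h
  exfalso
  have hae : (fun y => v y ^ 2) =ᵐ[volume.restrict (Kcube n)] 0 :=
    (integral_eq_zero_iff_of_nonneg (fun y => sq_nonneg (v y)) hint).mp h.symm
  have hNmeas : MeasurableSet ({y : EuclideanSpace ℝ (Fin n) | v y ≠ 0} ∩ Kcube n) :=
    ((measurableSet_eq_fun hc.measurable measurable_const).compl).inter (Kcube_measurable n)
  have hN : volume ({y : EuclideanSpace ℝ (Fin n) | v y ≠ 0} ∩ Kcube n) = 0 := by
    have h1 : volume.restrict (Kcube n) {y : EuclideanSpace ℝ (Fin n) | v y ≠ 0} = 0 := by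
      have h2 := ae_iff.mp hae
      convert h2 using 2
      ext y
      simp [pow_eq_zero_iff]
    have hmeas' : MeasurableSet {y : EuclideanSpace ℝ (Fin n) | v y ≠ 0} := by
      exact (measurableSet_eq_fun hc.measurable
        (measurable_const : Measurable fun _ : EuclideanSpace ℝ (Fin n) => (0:ℝ))).compl
    rw [Measure.restrict_apply hmeas'] at h1
    exact h1
  have hcover : {x : EuclideanSpace ℝ (Fin n) | v x ≠ 0} ⊆
      ⋃ g : lat n, (fun x => ↑g + x) ⁻¹' ({y : EuclideanSpace ℝ (Fin n) | v y ≠ 0} ∩ Kcube n) := by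
    intro x hx
    obtain ⟨g, hg⟩ := exists_lat_translate n x
    refine Set.mem_iUnion.mpr ⟨g, Set.mem_inter ?_ hg⟩
    show v (↑g + x) ≠ 0
    rw [hper g x]
    exact hx
  have hnull : volume {x : EuclideanSpace ℝ (Fin n) | v x ≠ 0} = 0 := by
    refine measure_mono_null hcover (measure_iUnion_null fun g => ?_)
    rw [(measurePreserving_add_left volume (g : EuclideanSpace ℝ (Fin n))).measure_preimage
      hNmeas.nullMeasurableSet]
    exact hN
  have : v =ᵐ[volume] (fun _ => 0) := by
    rw [Filter.EventuallyEq, ae_iff]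
    exact hnull
  have := (hc.ae_eq_iff_eq volume continuous_const).mp this
  obtain ⟨x, hx⟩ := hnz
  exact hx (by rw [this])
end

noncomputable def gG (n : ℕ) (ε : ℝ) (y : EuclideanSpace ℝ (Fin n)) : ℝ :=
  ε ^ (-(n : ℝ)/2) * Real.exp (-‖y‖^2/(4*ε))

section
variable (n : ℕ) {ε : ℝ}

lemma gG_cont (hε : 0 < ε) : Continuous (gG n ε) := by
  unfold gG
  exact continuous_const.mul (Real.continuous_exp.comp
    (((continuous_norm.pow 2).neg).div_const _))

lemma gG_pos (hε : 0 < ε) (y : EuclideanSpace ℝ (Fin n)) : 0 < gG n ε y :=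
  mul_pos (Real.rpow_pos_of_pos hε _) (Real.exp_pos _)

lemma gauss_integrable (hε : 0 < ε) :
    Integrable (fun y : EuclideanSpace ℝ (Fin n) => Real.exp (-(1/(4*ε)) * ‖y‖^2)) := by
  have hb : (0:ℝ) < 1/(4*ε) := by positivity
  have h := (GaussianFourier.integrable_cexp_neg_mul_sq_norm_add
    (b := ((1/(4*ε) : ℝ) : ℂ)) (by simpa using hb) 0 (0 : EuclideanSpace ℝ (Fin n))).norm
  convert h using 2 with y
  simp [Complex.norm_exp]
  norm_cast
  exact Or.inl rfl

lemma gG_integrable (hε : 0 < ε) : Integrable (gG n ε) := by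
  have h1 : gG n ε = fun y => ε ^ (-(n:ℝ)/2) * Real.exp (-(1/(4*ε)) * ‖y‖^2) := by
    funext y
    unfold gG
    congr 2
    field_simp
  rw [h1]
  exact (gauss_integrable n hε).const_mul _

lemma gG_integral_pos (hε : 0 < ε) : 0 < ∫ y, gG n ε y := by
  rw [integral_pos_iff_support_of_nonneg (fun y => (gG_pos n hε y).le) (gG_integrable n hε)]
  have h : Function.support (gG n ε) = Set.univ :=
    Set.eq_univ_of_forall fun y => (gG_pos n hε y).ne'
  rw [h]
  exact isOpen_univ.measure_pos volume ⟨0, trivial⟩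
end

lemma fub (n : ℕ) {ε : ℝ} (hε : 0 < ε) (f : EuclideanSpace ℝ (Fin n) → ℝ)
    (hfc : Continuous f)
    (hfper : ∀ (g : lat n) (x : EuclideanSpace ℝ (Fin n)), f (↑g + x) = f x)
    (C : ℝ) (hC : ∀ x, |f x| ≤ C) :
    Integrable (fun p : EuclideanSpace ℝ (Fin n) × EuclideanSpace ℝ (Fin n) =>
        f (p.1 + p.2) * gG n ε p.2) ((volume.restrict (Kcube n)).prod volume) ∧
    ∫ x in Kcube n, (∫ y, f (x + y) * gG n ε y)
      = (∫ x in Kcube n, f x) * (∫ y, gG n ε y) := by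
  have hC0 : 0 ≤ C := le_trans (abs_nonneg _) (hC 0)
  have hcont : Continuous (fun p : EuclideanSpace ℝ (Fin n) × EuclideanSpace ℝ (Fin n) =>
      f (p.1 + p.2) * gG n ε p.2) :=
    (hfc.comp (continuous_fst.add continuous_snd)).mul ((gG_cont n hε).comp continuous_snd)
  have hconst : Integrable (fun _ : EuclideanSpace ℝ (Fin n) => C) (volume.restrict (Kcube n)) := by
    rw [← IntegrableOn]
    exact integrableOn_const (Kcube_compact n).measure_lt_top.ne
  have hdom : Integrable (fun p : EuclideanSpace ℝ (Fin n) × EuclideanSpace ℝ (Fin n) =>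
      C * gG n ε p.2) ((volume.restrict (Kcube n)).prod volume) :=
    Integrable.mul_prod hconst (gG_integrable n hε)
  have hint : Integrable (fun p : EuclideanSpace ℝ (Fin n) × EuclideanSpace ℝ (Fin n) =>
      f (p.1 + p.2) * gG n ε p.2) ((volume.restrict (Kcube n)).prod volume) := by
    refine hdom.mono hcont.aestronglyMeasurable (Filter.Eventually.of_forall fun p => ?_)
    rw [Real.norm_eq_abs, Real.norm_eq_abs, abs_mul, abs_of_pos (gG_pos n hε p.2)]
    calc |f (p.1 + p.2)| * gG n ε p.2 ≤ C * gG n ε p.2 :=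
          mul_le_mul_of_nonneg_right (hC _) (gG_pos n hε p.2).le
      _ ≤ |C * gG n ε p.2| := le_abs_self _
  refine ⟨hint, ?_⟩
  calc ∫ x in Kcube n, (∫ y, f (x + y) * gG n ε y)
      = ∫ y, ∫ x in Kcube n, f (x + y) * gG n ε y := integral_integral_swap hint
    _ = ∫ y, (∫ x in Kcube n, f (x + y)) * gG n ε y := by
        congr 1
        funext y
        exact integral_mul_const _ _
    _ = ∫ y, (∫ x in Kcube n, f x) * gG n ε y := by
        congr 1
        funext y
        rw [shift_integral n f hfper y]
    _ = (∫ x in Kcube n, f x) * ∫ y, gG n ε y := integral_const_mul _ _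

theorem stmt_2 (n : ℕ) (hn : 1 ≤ n) (u : EuclideanSpace ℝ (Fin n) → ℝ)
    (hu : ContDiff ℝ 1 u) (hnz : ∃ x, u x ≠ 0)
    (hper : ∀ (x : EuclideanSpace ℝ (Fin n)) (k : Fin n → ℤ),
      u (x + (WithLp.equiv 2 (Fin n → ℝ)).symm (fun i => 2 * π * (k i : ℝ))) = u x)
    (hgradper : ∀ (x : EuclideanSpace ℝ (Fin n)) (k : Fin n → ℤ),
      gradient u (x + (WithLp.equiv 2 (Fin n → ℝ)).symm (fun i => 2 * π * (k i : ℝ)))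
        = gradient u x)
    (hgradL2 : IntegrableOn (fun y => ‖gradient u y‖ ^ 2)
      {y : EuclideanSpace ℝ (Fin n) | ∀ i, -π ≤ y i ∧ y i ≤ π})
    (ε : ℝ) (hε : 0 < ε) (lam : ℝ)
    (hlam : lam > (∫ y in {y : EuclideanSpace ℝ (Fin n) | ∀ i, -π ≤ y i ∧ y i ≤ π},
        ‖gradient u y‖ ^ 2) /
      (∫ y in {y : EuclideanSpace ℝ (Fin n) | ∀ i, -π ≤ y i ∧ y i ≤ π}, u y ^ 2)) :
    ∃ x : EuclideanSpace ℝ (Fin n),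
      lam * ∫ y : EuclideanSpace ℝ (Fin n),
          u (x + y) ^ 2 * (ε ^ (-(n : ℝ) / 2) * Real.exp (-‖y‖ ^ 2 / (4 * ε)))
      > ∫ y : EuclideanSpace ℝ (Fin n),
          ‖gradient u (x + y)‖ ^ 2 * (ε ^ (-(n : ℝ) / 2) * Real.exp (-‖y‖ ^ 2 / (4 * ε))) := by
  have hKset : {y : EuclideanSpace ℝ (Fin n) | ∀ i, -π ≤ y i ∧ y i ≤ π} = Kcube n := rfl
  rw [hKset] at hlam
  have hperL : ∀ (g : lat n) (x : EuclideanSpace ℝ (Fin n)), u (↑g + x) = u x := by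
    intro g x
    obtain ⟨k, hk⟩ := g.2
    rw [← hk]
    show u (latHom n k + x) = u x
    rw [add_comm]
    exact hper x k
  have hgperL : ∀ (g : lat n) (x : EuclideanSpace ℝ (Fin n)),
      gradient u (↑g + x) = gradient u x := by
    intro g x
    obtain ⟨k, hk⟩ := g.2
    rw [← hk]
    show gradient u (latHom n k + x) = gradient u x
    rw [add_comm]
    exact hgradper x k
  have hcu : Continuous u := hu.continuous
  have hgc : Continuous (gradient u) := by
    have h1 : Continuous (fderiv ℝ u) := hu.continuous_fderiv (by norm_num)
    exact ((InnerProductSpace.toDual ℝ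
      (EuclideanSpace ℝ (Fin n))).symm.continuous).comp h1
  have hf1c : Continuous (fun y : EuclideanSpace ℝ (Fin n) => u y ^ 2) := hcu.pow 2
  have hf2c : Continuous (fun y : EuclideanSpace ℝ (Fin n) => ‖gradient u y‖ ^ 2) :=
    hgc.norm.pow 2
  have hf1per : ∀ (g : lat n) (x : EuclideanSpace ℝ (Fin n)),
      (fun y => u y ^ 2) (↑g + x) = (fun y => u y ^ 2) x := by
    intro g x; simp only; rw [hperL g x]
  have hf2per : ∀ (g : lat n) (x : EuclideanSpace ℝ (Fin n)),
      (fun y => ‖gradient u y‖ ^ 2) (↑g + x) = (fun y => ‖gradient u y‖ ^ 2) x := by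
    intro g x; simp only; rw [hgperL g x]
  obtain ⟨C1, hC1⟩ := exists_bound n _ hf1c hf1per
  obtain ⟨C2, hC2⟩ := exists_bound n _ hf2c hf2per
  obtain ⟨hint1, heq1⟩ := fub n hε _ hf1c hf1per C1 hC1
  obtain ⟨hint2, heq2⟩ := fub n hε _ hf2c hf2per C2 hC2
  by_contra hcon
  push_neg at hcon
  have hcon' : ∀ x, lam * (∫ y, (fun y => u y ^ 2) (x + y) * gG n ε y)
      ≤ ∫ y, (fun y => ‖gradient u y‖ ^ 2) (x + y) * gG n ε y := hcon
  have hI1 : Integrable (fun x => ∫ y, (fun y => u y ^ 2) (x + y) * gG n ε y)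
      (volume.restrict (Kcube n)) := hint1.integral_prod_left
  have hI2 : Integrable (fun x => ∫ y, (fun y => ‖gradient u y‖ ^ 2) (x + y) * gG n ε y)
      (volume.restrict (Kcube n)) := hint2.integral_prod_left
  have hmono := integral_mono (hI1.const_mul lam) hI2 (fun x => hcon' x)
  rw [integral_const_mul] at hmono
  rw [heq1, heq2] at hmono
  beta_reduce at hmono
  have hA1 : 0 < ∫ y in Kcube n, u y ^ 2 := integral_sq_pos n u hcu hnz hperL
  have hc : 0 < ∫ y, gG n ε y := gG_integral_pos n hε
  have h5 : lam * (∫ y in Kcube n, u y ^ 2) ≤ ∫ y in Kcube n, ‖gradient u y‖ ^ 2 :=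
    le_of_mul_le_mul_right (by nlinarith) hc
  have h6 : lam ≤ (∫ y in Kcube n, ‖gradient u y‖ ^ 2) / (∫ y in Kcube n, u y ^ 2) :=
    (le_div_iff₀ hA1).mpr h5
  linarith
end

section
/- Let q : [τ_0, ∞) → ℝ be continuously differentiable and suppose that along [τ_0, ∞), q'(τ) ≤ a e^{-τ} max(q(τ),0) + b e^{-τ/2} (max(q(τ),0))^{1/2} + g(τ), where a, b ≥ 0, a e^{-τ_0} ≤ 1/2, and g ≥ 0 is integrable on [τ_0, ∞). Then q is bounded above on [τ_0, ∞) by a constant depending only on max(q(τ_0), 0), a, b, e^{-τ_0}, and ∫_{τ_0}^∞ g. -/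
open MeasureTheory Real Set

theorem stmt_12 (a b τ₀ M G : ℝ) (ha : 0 ≤ a) (hb : 0 ≤ b) (hG : 0 ≤ G)
    (hsmall : a * Real.exp (-τ₀) ≤ 1 / 2) :
    ∃ B : ℝ, ∀ (q q' g : ℝ → ℝ),
      (∀ τ ∈ Ici τ₀, HasDerivAt q (q' τ) τ) →
      (∀ τ ∈ Ici τ₀, 0 ≤ g τ) →
      IntegrableOn g (Ici τ₀) →
      (∫ τ in Ici τ₀, g τ) ≤ G →
      max (q τ₀) 0 ≤ M →
      (∀ τ ∈ Ici τ₀,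
        q' τ ≤ a * Real.exp (-τ) * max (q τ) 0
          + b * Real.exp (-τ / 2) * Real.sqrt (max (q τ) 0) + g τ) →
      ∀ τ ∈ Ici τ₀, q τ ≤ B := by
  set c : ℝ := b * Real.exp (-τ₀ / 2) with hc_def
  have hc : 0 ≤ c := mul_nonneg hb (Real.exp_pos _).le
  set ε : ℝ := 1 / (8 * (c + 1)) with hε_def
  have hεpos : 0 < ε := by positivity
  set B : ℝ := 4 * (M + 4 * c * (c + 1) + G + 1) with hB_def
  refine ⟨B, ?_⟩
  intro q q' g hq hgpos hgint hgG hqM hineq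
  have hM0 : 0 ≤ M := le_trans (le_max_right _ _) hqM
  have hB0 : 0 ≤ B := by positivity
  -- the continuous part of the majorant
  set ψ : ℝ → ℝ := fun s => a * B * Real.exp (-s) + (ε * B + 2 * (c + 1)) * b * Real.exp (-s / 2)
    with hψ_def
  have hA2 : 0 ≤ ε * B + 2 * (c + 1) := by positivity
  have hψcont : Continuous ψ := by
    apply Continuous.add
    · exact continuous_const.mul (Real.continuous_exp.comp continuous_neg)
    · exact continuous_const.mul (Real.continuous_exp.comp (continuous_neg.div_const 2))
  -- sqrt bound : √x ≤ ε x + 1/(4 ε) ; and 1/(4ε) = 2(c+1)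
  have hsqrt : ∀ x : ℝ, 0 ≤ x → Real.sqrt x ≤ ε * x + 2 * (c + 1) := by
    intro x hx
    have h1 : Real.sqrt x * Real.sqrt x = x := Real.mul_self_sqrt hx
    have h2 : 0 ≤ Real.sqrt x := Real.sqrt_nonneg x
    have hc8 : (0:ℝ) < 8 * (c + 1) := by positivity
    have key : Real.sqrt x * (8 * (c + 1)) ≤ x + 16 * (c + 1) ^ 2 := by
      nlinarith [sq_nonneg (Real.sqrt x - 4 * (c + 1)), h1]
    have hle : Real.sqrt x ≤ (x + 16 * (c + 1) ^ 2) / (8 * (c + 1)) :=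
      (le_div_iff₀ hc8).mpr key
    have heq : (x + 16 * (c + 1) ^ 2) / (8 * (c + 1)) = ε * x + 2 * (c + 1) := by
      rw [hε_def]; field_simp; ring
    rw [heq] at hle; exact hle
  -- main claim by first-crossing argument
  intro τstar hτstar
  by_contra hcon
  push_neg at hcon
  have hqcont : ContinuousOn q (Icc τ₀ τstar) := by
    intro t ht
    exact ((hq t ht.1).continuousAt).continuousWithinAt
  -- the crossing set
  set S : Set ℝ := Icc τ₀ τstar ∩ q ⁻¹' (Ici B) with hS_def
  have hSne : S.Nonempty := ⟨τstar, ⟨⟨hτstar, le_rfl⟩, le_of_lt hcon⟩⟩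
  have hSbdd : BddBelow S := ⟨τ₀, fun t ht => ht.1.1⟩
  have hSclosed : IsClosed S :=
    hqcont.preimage_isClosed_of_isClosed isClosed_Icc isClosed_Ici
  set t₁ : ℝ := sInf S with ht₁_def
  have ht₁S : t₁ ∈ S := hSclosed.csInf_mem hSne hSbdd
  have ht₁0 : τ₀ ≤ t₁ := ht₁S.1.1
  have ht₁star : t₁ ≤ τstar := ht₁S.1.2
  have hqt₁ : B ≤ q t₁ := ht₁S.2
  -- on (τ₀, t₁), q ≤ B
  have hbelow : ∀ x ∈ Ioo τ₀ t₁, q x ≤ B := by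
    intro x hx
    by_contra hqx
    push_neg at hqx
    have hxS : x ∈ S := ⟨⟨hx.1.le, hx.2.le.trans ht₁star⟩, hqx.le⟩
    exact absurd (csInf_le hSbdd hxS) (not_le.mpr hx.2)
  -- the derivative bound on (τ₀, t₁)
  have hder : ∀ x ∈ Ioo τ₀ t₁, q' x ≤ ψ x + g x := by
    intro x hx
    have hxI : x ∈ Ici τ₀ := le_of_lt hx.1
    have h1 := hineq x hxI
    have hqx : max (q x) 0 ≤ B := max_le (hbelow x hx) hB0
    have hqx0 : 0 ≤ max (q x) 0 := le_max_right _ _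
    have hs : Real.sqrt (max (q x) 0) ≤ ε * B + 2 * (c + 1) := by
      calc Real.sqrt (max (q x) 0) ≤ ε * max (q x) 0 + 2 * (c + 1) := hsqrt _ hqx0
        _ ≤ ε * B + 2 * (c + 1) := by
          have := mul_le_mul_of_nonneg_left hqx hεpos.le
          linarith
    have he1 : (0:ℝ) < Real.exp (-x) := Real.exp_pos _
    have he2 : (0:ℝ) < Real.exp (-x / 2) := Real.exp_pos _
    have t1 : a * Real.exp (-x) * max (q x) 0 ≤ a * B * Real.exp (-x) := by
      have h := mul_le_mul_of_nonneg_left hqx (mul_nonneg ha he1.le)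
      calc a * Real.exp (-x) * max (q x) 0 = a * Real.exp (-x) * max (q x) 0 := rfl
        _ ≤ a * Real.exp (-x) * B := h
        _ = a * B * Real.exp (-x) := by ring
    have t2 : b * Real.exp (-x / 2) * Real.sqrt (max (q x) 0)
        ≤ (ε * B + 2 * (c + 1)) * b * Real.exp (-x / 2) := by
      have h := mul_le_mul_of_nonneg_left hs (mul_nonneg hb he2.le)
      calc b * Real.exp (-x / 2) * Real.sqrt (max (q x) 0)
          = b * Real.exp (-x / 2) * Real.sqrt (max (q x) 0) := rfl
        _ ≤ b * Real.exp (-x / 2) * (ε * B + 2 * (c + 1)) := h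
        _ = (ε * B + 2 * (c + 1)) * b * Real.exp (-x / 2) := by ring
    simp only [hψ_def]
    linarith
  -- φ is integrable on [τ₀, t₁]
  have hgint' : IntegrableOn g (Icc τ₀ t₁) :=
    hgint.mono_set (fun x hx => hx.1)
  have hφint : IntegrableOn (fun s => ψ s + g s) (Icc τ₀ t₁) :=
    (hψcont.integrableOn_Icc).add hgint'
  -- apply the comparison FTC lemma
  have key : q t₁ - q τ₀ ≤ ∫ y in τ₀..t₁, (ψ y + g y) := by
    apply intervalIntegral.sub_le_integral_of_hasDeriv_right_of_le ht₁0
      (hqcont.mono (Icc_subset_Icc le_rfl ht₁star))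
      (fun x hx => ((hq x (le_of_lt hx.1)).hasDerivWithinAt)) hφint hder
  -- split the integral
  have hψii : IntervalIntegrable ψ volume τ₀ t₁ := hψcont.intervalIntegrable _ _
  have hgii : IntervalIntegrable g volume τ₀ t₁ := by
    rw [intervalIntegrable_iff_integrableOn_Icc_of_le ht₁0]
    exact hgint'
  have hsplit : (∫ y in τ₀..t₁, (ψ y + g y)) = (∫ y in τ₀..t₁, ψ y) + ∫ y in τ₀..t₁, g y :=
    intervalIntegral.integral_add hψii hgii
  -- bound the g-part
  have hgpart : (∫ y in τ₀..t₁, g y) ≤ G := by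
    rw [intervalIntegral.integral_of_le ht₁0]
    refine le_trans ?_ hgG
    apply setIntegral_mono_set hgint
    · filter_upwards [ae_restrict_mem measurableSet_Ici] with x hx using hgpos x hx
    · exact HasSubset.Subset.eventuallyLE (fun x hx => le_of_lt hx.1)
  -- compute the ψ-part via FTC
  have hψpart : (∫ y in τ₀..t₁, ψ y)
      ≤ a * B * Real.exp (-τ₀) + 2 * ((ε * B + 2 * (c + 1)) * b) * Real.exp (-τ₀ / 2) := by
    set F : ℝ → ℝ := fun s =>
      -(a * B) * Real.exp (-s) - 2 * ((ε * B + 2 * (c + 1)) * b) * Real.exp (-s / 2) with hF_def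
    have hF : ∀ x : ℝ, HasDerivAt F (ψ x) x := by
      intro x
      have h1 : HasDerivAt (fun s : ℝ => Real.exp (-s)) (-Real.exp (-x)) x := by
        simpa [Function.comp_def] using (Real.hasDerivAt_exp (-x)).comp x (hasDerivAt_neg x)
      have hd : HasDerivAt (fun s : ℝ => -s / 2) (-(1 / 2) : ℝ) x := by
        exact ((hasDerivAt_neg x).div_const 2).congr_deriv (by norm_num)
      have h2 : HasDerivAt (fun s : ℝ => Real.exp (-s / 2)) (Real.exp (-x / 2) * -(1 / 2)) x :=
        by have := (Real.hasDerivAt_exp (-x / 2)).comp x hd; exact this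
      have h := (h1.const_mul (-(a * B))).sub (h2.const_mul (2 * ((ε * B + 2 * (c + 1)) * b)))
      refine h.congr_deriv ?_
      simp only [hψ_def]
      ring
    have hFTC : (∫ y in τ₀..t₁, ψ y) = F t₁ - F τ₀ :=
      intervalIntegral.integral_eq_sub_of_hasDerivAt (fun x _ => hF x) hψii
    rw [hFTC, hF_def]
    have he1 : (0:ℝ) < Real.exp (-t₁) := Real.exp_pos _
    have he2 : (0:ℝ) < Real.exp (-t₁ / 2) := Real.exp_pos _
    have hab : 0 ≤ a * B := mul_nonneg ha hB0
    have hA2b : 0 ≤ (ε * B + 2 * (c + 1)) * b := mul_nonneg hA2 hb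
    have e1 : 0 ≤ a * B * Real.exp (-t₁) := mul_nonneg hab he1.le
    have e2 : 0 ≤ 2 * ((ε * B + 2 * (c + 1)) * b) * Real.exp (-t₁ / 2) := by positivity
    simp only []
    linarith
  -- collect the estimates
  have hqτ₀ : q τ₀ ≤ M := le_trans (le_max_left _ _) hqM
  have hmain : B ≤ M + a * B * Real.exp (-τ₀)
      + 2 * ((ε * B + 2 * (c + 1)) * b) * Real.exp (-τ₀ / 2) + G := by
    have h := key
    rw [hsplit] at h
    linarith
  -- final arithmetic contradiction
  have h1 : a * B * Real.exp (-τ₀) = (a * Real.exp (-τ₀)) * B := by ring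
  have h2 : a * Real.exp (-τ₀) * B ≤ (1 / 2) * B :=
    mul_le_mul_of_nonneg_right hsmall hB0
  have h3 : 2 * ((ε * B + 2 * (c + 1)) * b) * Real.exp (-τ₀ / 2)
      = 2 * ε * c * B + 4 * c * (c + 1) := by
    rw [hc_def]; ring
  have h4 : 2 * ε * c ≤ 1 / 4 := by
    have e : 2 * ε * c = c / (4 * (c + 1)) := by rw [hε_def]; field_simp; ring
    rw [e, div_le_iff₀ (by positivity : (0:ℝ) < 4 * (c + 1))]
    linarith
  have h5 : 2 * ε * c * B ≤ (1 / 4) * B :=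
    mul_le_mul_of_nonneg_right h4 hB0
  rw [h1, h3] at hmain
  have hfin : B ≤ M + (1 / 2) * B + ((1 / 4) * B + 4 * c * (c + 1)) + G := by linarith
  rw [hB_def] at hfin
  linarith
end

section
/- Let u : ℝ^n → ℝ be continuous and square-integrable, not identically zero, satisfying ∫_{ℝ^n} u^2 dx ≤ M ∫_{B_1} u^2 dx for some M ≥ 1. Let ε ∈ (0, 1/C] for C = C(n) sufficiently large, and set G_0(y, ε) = ε^{-n/2} e^{-|y|^2/(4ε)}. If λ > 0 is such that λ ∫_{ℝ^n} u(x+y)^2 G_0(y,ε) dy ≤ ∫_{ℝ^n} |∇u(x+y)|^2 G_0(y,ε) dy for all x in the ball B_2, then λ ≤ C' M ‖∇u‖_{L^2(ℝ^n)}^2 / ‖u‖_{L^2(ℝ^n)}^2 for a constant C' depending only on n. -/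
open MeasureTheory Real

lemma my_integrable_rexp_neg_mul_sq_norm {V : Type*} [NormedAddCommGroup V]
    [InnerProductSpace ℝ V] [FiniteDimensional ℝ V] [MeasurableSpace V] [BorelSpace V]
    {b : ℝ} (hb : 0 < b) :
    Integrable fun v : V => Real.exp (-b * ‖v‖ ^ 2) := by
  have h := (GaussianFourier.integrable_cexp_neg_mul_sq_norm_add (V := V)
      (b := (b : ℂ)) (by simpa using hb) 0 0).re
  refine h.congr (Filter.Eventually.of_forall fun v => ?_)
  simp only [zero_mul, add_zero]
  rw [show (-(b : ℂ) * (‖v‖ : ℂ) ^ 2) = ((-b * ‖v‖ ^ 2 : ℝ) : ℂ) by push_cast; ring,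
    ← Complex.ofReal_exp, RCLike.re_to_complex, Complex.ofReal_re]

set_option maxHeartbeats 1000000 in
theorem stmt_18 (n : ℕ) (hn : 1 ≤ n) :
    ∃ C : ℝ, 0 < C ∧ ∃ C' : ℝ, 0 < C' ∧
      ∀ (u : EuclideanSpace ℝ (Fin n) → ℝ), ContDiff ℝ 1 u → (∃ x, u x ≠ 0) →
        Integrable (fun x => u x ^ 2) →
        Integrable (fun x => ‖gradient u x‖ ^ 2) →
        ∀ M : ℝ, 1 ≤ M →
          (∫ x : EuclideanSpace ℝ (Fin n), u x ^ 2)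
            ≤ M * ∫ x in Metric.ball (0 : EuclideanSpace ℝ (Fin n)) 1, u x ^ 2 →
        ∀ ε : ℝ, 0 < ε → ε ≤ 1 / C →
        ∀ lam : ℝ, 0 < lam →
          (∀ x ∈ Metric.ball (0 : EuclideanSpace ℝ (Fin n)) 2,
            lam * ∫ y : EuclideanSpace ℝ (Fin n),
                u (x + y) ^ 2 * (ε ^ (-(n : ℝ) / 2) * Real.exp (-‖y‖ ^ 2 / (4 * ε)))
              ≤ ∫ y : EuclideanSpace ℝ (Fin n),
                  ‖gradient u (x + y)‖ ^ 2 *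
                    (ε ^ (-(n : ℝ) / 2) * Real.exp (-‖y‖ ^ 2 / (4 * ε)))) →
          lam ≤ C' * M * (∫ x : EuclideanSpace ℝ (Fin n), ‖gradient u x‖ ^ 2)
            / (∫ x : EuclideanSpace ℝ (Fin n), u x ^ 2) := by
  classical
  haveI : Nonempty (Fin n) := ⟨⟨0, hn⟩⟩
  haveI : Nontrivial (EuclideanSpace ℝ (Fin n)) := inferInstance
  refine ⟨1, one_pos, ?_⟩
  have hvol0 : (0 : ENNReal) < volume (Metric.ball (0 : EuclideanSpace ℝ (Fin n)) 1) :=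
    Metric.measure_ball_pos volume 0 one_pos
  have hvolt : volume (Metric.ball (0 : EuclideanSpace ℝ (Fin n)) 1) ≠ ⊤ :=
    measure_ball_lt_top.ne
  set κ : ℝ :=
    Real.exp (-(1/4)) * (volume (Metric.ball (0 : EuclideanSpace ℝ (Fin n)) 1)).toReal with hκ
  have hκpos : 0 < κ := mul_pos (Real.exp_pos _) (ENNReal.toReal_pos hvol0.ne' hvolt)
  refine ⟨(4 * π) ^ ((n : ℝ) / 2) / κ, by positivity, ?_⟩
  intro u hu hune hu2 hgrad2 M hM hdoub ε hε hεC lam hlam hyp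
  have hε1 : ε ≤ 1 := by linarith [hεC, (by norm_num : (1:ℝ)/1 = 1)]
  have hcu : Continuous u := hu.continuous
  have hcg : Continuous (gradient u) := by
    exact (InnerProductSpace.toDual ℝ _).symm.continuous.comp (hu.continuous_fderiv one_ne_zero)
  set g : EuclideanSpace ℝ (Fin n) → ℝ :=
    fun y => ε ^ (-(n : ℝ) / 2) * Real.exp (-‖y‖ ^ 2 / (4 * ε)) with hgdef
  have hg0 : ∀ y, 0 ≤ g y := fun y =>
    mul_nonneg (Real.rpow_nonneg hε.le _) (Real.exp_pos _).le
  have hgc : Continuous g := by fun_prop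
  have hgb : ∀ y, ‖g y‖ ≤ ε ^ (-(n : ℝ) / 2) := by
    intro y
    rw [Real.norm_eq_abs, abs_of_nonneg (hg0 y)]
    have h1 : Real.exp (-‖y‖ ^ 2 / (4 * ε)) ≤ 1 := by
      rw [Real.exp_le_one_iff]
      apply div_nonpos_of_nonpos_of_nonneg (neg_nonpos.2 (by positivity)) (by positivity)
    calc g y ≤ ε ^ (-(n : ℝ) / 2) * 1 :=
          mul_le_mul_of_nonneg_left h1 (Real.rpow_nonneg hε.le _)
      _ = _ := mul_one _
  have hb4 : 0 < 1 / (4 * ε) := by positivity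
  have harg : ∀ y : EuclideanSpace ℝ (Fin n),
      -‖y‖ ^ 2 / (4 * ε) = -(1 / (4 * ε)) * ‖y‖ ^ 2 := fun y => by ring
  have hgexp : ∀ y : EuclideanSpace ℝ (Fin n),
      g y = ε ^ (-(n : ℝ) / 2) * Real.exp (-(1 / (4 * ε)) * ‖y‖ ^ 2) := by
    intro y
    rw [hgdef]
    beta_reduce
    rw [harg y]
  have hgi : Integrable g := by
    have := (my_integrable_rexp_neg_mul_sq_norm
      (V := EuclideanSpace ℝ (Fin n)) hb4).const_mul (ε ^ (-(n : ℝ) / 2))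
    exact this.congr (Filter.Eventually.of_forall fun y => (hgexp y).symm)
  have hgint : ∫ y, g y = (4 * π) ^ ((n : ℝ) / 2) := by
    calc ∫ y, g y
        = ε ^ (-(n : ℝ) / 2) * ∫ y : EuclideanSpace ℝ (Fin n),
            Real.exp (-(1 / (4 * ε)) * ‖y‖ ^ 2) := by
          simp_rw [hgexp]; exact integral_const_mul _ _
      _ = ε ^ (-(n : ℝ) / 2) * (π / (1 / (4 * ε))) ^ ((Module.finrank ℝ
            (EuclideanSpace ℝ (Fin n)) : ℝ) / 2) := by
          rw [GaussianFourier.integral_rexp_neg_mul_sq_norm hb4]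
      _ = (4 * π) ^ ((n : ℝ) / 2) := by
          rw [finrank_euclideanSpace_fin]
          rw [show π / (1 / (4 * ε)) = (4 * π) * ε by field_simp]
          rw [Real.mul_rpow (by positivity) hε.le]
          rw [← mul_assoc, mul_comm (ε ^ (-(n : ℝ) / 2)) _, mul_assoc,
            ← Real.rpow_add hε, show -(n : ℝ) / 2 + (n : ℝ) / 2 = 0 by ring,
            Real.rpow_zero, mul_one]
  -- notation
  set S₁ := Metric.ball (0 : EuclideanSpace ℝ (Fin n)) 1 with hS₁
  set S₂ := Metric.ball (0 : EuclideanSpace ℝ (Fin n)) 2 with hS₂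
  set S : ℝ := ∫ x : EuclideanSpace ℝ (Fin n), u x ^ 2 with hSdef
  set D : ℝ := ∫ x : EuclideanSpace ℝ (Fin n), ‖gradient u x‖ ^ 2 with hDdef
  set I₁ : ℝ := ∫ x in S₁, u x ^ 2 with hI₁def
  have hDnn : 0 ≤ D := integral_nonneg fun x => sq_nonneg _
  have hI₁nn : 0 ≤ I₁ := setIntegral_nonneg measurableSet_ball fun x _ => sq_nonneg _
  have hSpos : 0 < S := by
    obtain ⟨x₀, hx₀⟩ := hune
    have hsupp : Function.support (fun x => u x ^ 2) = {x | u x ≠ 0} := by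
      ext x; simp [Function.support, pow_eq_zero_iff]
    have hopen : IsOpen {x : EuclideanSpace ℝ (Fin n) | u x ≠ 0} :=
      isOpen_compl_singleton.preimage hcu
    have hpos : 0 < volume (Function.support fun x => u x ^ 2) := by
      rw [hsupp]; exact hopen.measure_pos volume ⟨x₀, hx₀⟩
    exact (integral_pos_iff_support_of_nonneg (fun x => sq_nonneg _) hu2).2 hpos
  -- integrability of the integrands appearing in the hypothesis
  have hIx : ∀ x : EuclideanSpace ℝ (Fin n), Integrable fun y => u (x + y) ^ 2 * g y := by
    intro x
    have h1 : Integrable fun y : EuclideanSpace ℝ (Fin n) => u (x + y) ^ 2 :=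
      hu2.comp_add_left x
    have h2 := h1.bdd_mul hgc.aestronglyMeasurable (c := ε ^ (-(n : ℝ) / 2)) (Filter.Eventually.of_forall hgb)
    exact h2.congr (Filter.Eventually.of_forall fun y => mul_comm _ _)
  have hJx : ∀ x : EuclideanSpace ℝ (Fin n),
      Integrable fun y => ‖gradient u (x + y)‖ ^ 2 * g y := by
    intro x
    have h1 : Integrable fun y : EuclideanSpace ℝ (Fin n) => ‖gradient u (x + y)‖ ^ 2 :=
      hgrad2.comp_add_left x
    have h2 := h1.bdd_mul hgc.aestronglyMeasurable (c := ε ^ (-(n : ℝ) / 2)) (Filter.Eventually.of_forall hgb)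
    exact h2.congr (Filter.Eventually.of_forall fun y => mul_comm _ _)
  have hPeq : ∀ x : EuclideanSpace ℝ (Fin n),
      ∫⁻ y, ENNReal.ofReal (u (x + y) ^ 2 * g y)
        = ENNReal.ofReal (∫ y, u (x + y) ^ 2 * g y) := fun x =>
    (ofReal_integral_eq_lintegral_ofReal (hIx x)
      (Filter.Eventually.of_forall fun y => mul_nonneg (sq_nonneg _) (hg0 y))).symm
  have hQeq : ∀ x : EuclideanSpace ℝ (Fin n),
      ∫⁻ y, ENNReal.ofReal (‖gradient u (x + y)‖ ^ 2 * g y)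
        = ENNReal.ofReal (∫ y, ‖gradient u (x + y)‖ ^ 2 * g y) := fun x =>
    (ofReal_integral_eq_lintegral_ofReal (hJx x)
      (Filter.Eventually.of_forall fun y => mul_nonneg (sq_nonneg _) (hg0 y))).symm
  -- step 1 : pointwise inequality in ℝ≥0∞
  have step1 : ∀ x ∈ S₂,
      ENNReal.ofReal lam * ∫⁻ y, ENNReal.ofReal (u (x + y) ^ 2 * g y)
        ≤ ∫⁻ y, ENNReal.ofReal (‖gradient u (x + y)‖ ^ 2 * g y) := by
    intro x hx
    rw [hPeq x, hQeq x, ← ENNReal.ofReal_mul hlam.le]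
    exact ENNReal.ofReal_le_ofReal (hyp x hx)
  -- step 2 : integrate over S₂
  have step2 : ENNReal.ofReal lam * ∫⁻ x in S₂, ∫⁻ y, ENNReal.ofReal (u (x + y) ^ 2 * g y)
      ≤ ∫⁻ x in S₂, ∫⁻ y, ENNReal.ofReal (‖gradient u (x + y)‖ ^ 2 * g y) := by
    rw [← lintegral_const_mul' _ _ ENNReal.ofReal_ne_top]
    exact setLIntegral_mono' measurableSet_ball step1
  -- measurability on the product space
  have hmeasP : Measurable fun z : EuclideanSpace ℝ (Fin n) × EuclideanSpace ℝ (Fin n) =>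
      ENNReal.ofReal (u (z.1 + z.2) ^ 2 * g z.2) :=
    (((hcu.comp (continuous_fst.add continuous_snd)).pow 2).mul
      (hgc.comp continuous_snd)).measurable.ennreal_ofReal
  have hmeasQ : Measurable fun z : EuclideanSpace ℝ (Fin n) × EuclideanSpace ℝ (Fin n) =>
      ENNReal.ofReal (‖gradient u (z.1 + z.2)‖ ^ 2 * g z.2) :=
    ((((hcg.comp (continuous_fst.add continuous_snd)).norm.pow 2)).mul
      (hgc.comp continuous_snd)).measurable.ennreal_ofReal
  -- upper bound for the right-hand side
  have upper : ∫⁻ x in S₂, ∫⁻ y, ENNReal.ofReal (‖gradient u (x + y)‖ ^ 2 * g y)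
      ≤ ENNReal.ofReal ((4 * π) ^ ((n : ℝ) / 2) * D) := by
    have h1 : ∫⁻ x in S₂, ∫⁻ y, ENNReal.ofReal (‖gradient u (x + y)‖ ^ 2 * g y)
        ≤ ∫⁻ x, ∫⁻ y, ENNReal.ofReal (‖gradient u (x + y)‖ ^ 2 * g y) :=
      setLIntegral_le_lintegral _ _
    have h2 : ∫⁻ x, ∫⁻ y, ENNReal.ofReal (‖gradient u (x + y)‖ ^ 2 * g y)
        = ∫⁻ y, ∫⁻ x, ENNReal.ofReal (‖gradient u (x + y)‖ ^ 2 * g y) :=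
      lintegral_lintegral_swap hmeasQ.aemeasurable
    have h3 : ∀ y : EuclideanSpace ℝ (Fin n),
        ∫⁻ x, ENNReal.ofReal (‖gradient u (x + y)‖ ^ 2 * g y)
          = ENNReal.ofReal D * ENNReal.ofReal (g y) := by
      intro y
      calc ∫⁻ x, ENNReal.ofReal (‖gradient u (x + y)‖ ^ 2 * g y)
          = ∫⁻ x, ENNReal.ofReal (‖gradient u (x + y)‖ ^ 2) * ENNReal.ofReal (g y) := by
            simp_rw [ENNReal.ofReal_mul (sq_nonneg _)]
        _ = (∫⁻ x, ENNReal.ofReal (‖gradient u (x + y)‖ ^ 2)) * ENNReal.ofReal (g y) :=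
            lintegral_mul_const' _ _ ENNReal.ofReal_ne_top
        _ = (∫⁻ x, ENNReal.ofReal (‖gradient u x‖ ^ 2)) * ENNReal.ofReal (g y) := by
            rw [lintegral_add_right_eq_self
              (fun x => ENNReal.ofReal (‖gradient u x‖ ^ 2)) y]
        _ = ENNReal.ofReal D * ENNReal.ofReal (g y) := by
            rw [← ofReal_integral_eq_lintegral_ofReal hgrad2
              (Filter.Eventually.of_forall fun x => sq_nonneg _)]
    calc ∫⁻ x in S₂, ∫⁻ y, ENNReal.ofReal (‖gradient u (x + y)‖ ^ 2 * g y)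
        ≤ ∫⁻ y, ∫⁻ x, ENNReal.ofReal (‖gradient u (x + y)‖ ^ 2 * g y) := h2 ▸ h1
      _ = ∫⁻ y, ENNReal.ofReal D * ENNReal.ofReal (g y) := lintegral_congr h3
      _ = ENNReal.ofReal D * ∫⁻ y, ENNReal.ofReal (g y) :=
          lintegral_const_mul' _ _ ENNReal.ofReal_ne_top
      _ = ENNReal.ofReal D * ENNReal.ofReal ((4 * π) ^ ((n : ℝ) / 2)) := by
          rw [← ofReal_integral_eq_lintegral_ofReal hgi
            (Filter.Eventually.of_forall hg0), hgint]
      _ = ENNReal.ofReal ((4 * π) ^ ((n : ℝ) / 2) * D) := by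
          rw [← ENNReal.ofReal_mul hDnn, mul_comm]
  -- lower bound for the Gaussian mass on the unit ball
  have hgauss_low : ENNReal.ofReal κ ≤ ∫⁻ y in S₁, ENNReal.ofReal (g y) := by
    have hsub : Metric.ball (0 : EuclideanSpace ℝ (Fin n)) (Real.sqrt ε) ⊆ S₁ :=
      Metric.ball_subset_ball (Real.sqrt_le_one.2 hε1)
    have hptw : ∀ y ∈ Metric.ball (0 : EuclideanSpace ℝ (Fin n)) (Real.sqrt ε),
        ENNReal.ofReal (ε ^ (-(n : ℝ) / 2) * Real.exp (-(1/4)))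
          ≤ ENNReal.ofReal (g y) := by
      intro y hy
      apply ENNReal.ofReal_le_ofReal
      apply mul_le_mul_of_nonneg_left _ (Real.rpow_nonneg hε.le _)
      apply Real.exp_le_exp.2
      have hy' : ‖y‖ < Real.sqrt ε := by simpa using Metric.mem_ball.1 hy
      have h2 : ‖y‖ ^ 2 ≤ ε := by
        have := Real.sq_sqrt hε.le
        nlinarith [norm_nonneg y, Real.sqrt_nonneg ε]
      have h3 : ‖y‖ ^ 2 / (4 * ε) ≤ 1 / 4 := by
        rw [div_le_iff₀ (by positivity)]; nlinarith
      rw [neg_div]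
      exact neg_le_neg h3
    have hvol : volume (Metric.ball (0 : EuclideanSpace ℝ (Fin n)) (Real.sqrt ε))
        = ENNReal.ofReal (Real.sqrt ε ^ n) * volume S₁ := by
      rw [hS₁, Measure.addHaar_ball _ _ (Real.sqrt_nonneg ε), finrank_euclideanSpace_fin]
    have hcomb : ε ^ (-(n : ℝ) / 2) * Real.exp (-(1/4)) * Real.sqrt ε ^ n
        = Real.exp (-(1/4)) := by
      rw [mul_comm (ε ^ (-(n : ℝ) / 2)) _, mul_assoc]
      rw [Real.sqrt_eq_rpow, ← Real.rpow_natCast (ε ^ ((1:ℝ)/2)) n,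
        ← Real.rpow_mul hε.le, ← Real.rpow_add hε,
        show -(n : ℝ) / 2 + (1/2) * (n : ℕ) = 0 by push_cast; ring, Real.rpow_zero, mul_one]
    calc ENNReal.ofReal κ
        = ENNReal.ofReal (Real.exp (-(1/4))) * volume S₁ := by
          rw [hκ, ENNReal.ofReal_mul (Real.exp_pos _).le, ENNReal.ofReal_toReal hvolt]
      _ = ENNReal.ofReal (ε ^ (-(n : ℝ) / 2) * Real.exp (-(1/4)))
            * volume (Metric.ball (0 : EuclideanSpace ℝ (Fin n)) (Real.sqrt ε)) := by
          rw [hvol, ← mul_assoc, ← ENNReal.ofReal_mul (by positivity), hcomb]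
      _ = ∫⁻ _ in Metric.ball (0 : EuclideanSpace ℝ (Fin n)) (Real.sqrt ε),
            ENNReal.ofReal (ε ^ (-(n : ℝ) / 2) * Real.exp (-(1/4))) :=
          (setLIntegral_const _ _).symm
      _ ≤ ∫⁻ y in Metric.ball (0 : EuclideanSpace ℝ (Fin n)) (Real.sqrt ε),
            ENNReal.ofReal (g y) := setLIntegral_mono' measurableSet_ball hptw
      _ ≤ ∫⁻ y in S₁, ENNReal.ofReal (g y) := lintegral_mono_set hsub
  -- lower bound for the left-hand side
  have lower : ENNReal.ofReal I₁ * ENNReal.ofReal κ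
      ≤ ∫⁻ x in S₂, ∫⁻ y, ENNReal.ofReal (u (x + y) ^ 2 * g y) := by
    have hA1 : ∫⁻ x in S₂, ∫⁻ y in S₁, ENNReal.ofReal (u (x + y) ^ 2 * g y)
        ≤ ∫⁻ x in S₂, ∫⁻ y, ENNReal.ofReal (u (x + y) ^ 2 * g y) :=
      lintegral_mono fun x => setLIntegral_le_lintegral _ _
    have hswap : ∫⁻ x in S₂, ∫⁻ y in S₁, ENNReal.ofReal (u (x + y) ^ 2 * g y)
        = ∫⁻ y in S₁, ∫⁻ x in S₂, ENNReal.ofReal (u (x + y) ^ 2 * g y) :=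
      lintegral_lintegral_swap hmeasP.aemeasurable
    have hinner : ∀ y ∈ S₁,
        ENNReal.ofReal I₁ * ENNReal.ofReal (g y)
          ≤ ∫⁻ x in S₂, ENNReal.ofReal (u (x + y) ^ 2 * g y) := by
      intro y hy
      have hy' : ‖y‖ < 1 := by simpa using Metric.mem_ball.1 hy
      have hsub2 : (fun x : EuclideanSpace ℝ (Fin n) => x + y) ⁻¹' S₁ ⊆ S₂ := by
        intro x hx
        rw [hS₁] at hx; rw [hS₂]
        rw [Set.mem_preimage, Metric.mem_ball, dist_zero_right] at hx
        rw [Metric.mem_ball, dist_zero_right]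
        calc ‖x‖ = ‖(x + y) - y‖ := by rw [add_sub_cancel_right]
          _ ≤ ‖x + y‖ + ‖y‖ := norm_sub_le _ _
          _ < 2 := by linarith
      have hchg : ∫⁻ x in (fun x : EuclideanSpace ℝ (Fin n) => x + y) ⁻¹' S₁,
          ENNReal.ofReal (u (x + y) ^ 2) = ∫⁻ z in S₁, ENNReal.ofReal (u z ^ 2) :=
        (measurePreserving_add_right volume y).setLIntegral_comp_preimage_emb
          (Homeomorph.addRight y).isClosedEmbedding.measurableEmbedding
          (fun z => ENNReal.ofReal (u z ^ 2)) S₁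
      have hL : ∫⁻ z in S₁, ENNReal.ofReal (u z ^ 2) = ENNReal.ofReal I₁ :=
        (ofReal_integral_eq_lintegral_ofReal hu2.integrableOn
          (Filter.Eventually.of_forall fun z => sq_nonneg _)).symm
      calc ENNReal.ofReal I₁ * ENNReal.ofReal (g y)
          = (∫⁻ x in (fun x : EuclideanSpace ℝ (Fin n) => x + y) ⁻¹' S₁,
              ENNReal.ofReal (u (x + y) ^ 2)) * ENNReal.ofReal (g y) := by
            rw [hchg, hL]
        _ ≤ (∫⁻ x in S₂, ENNReal.ofReal (u (x + y) ^ 2)) * ENNReal.ofReal (g y) :=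
            mul_le_mul_left (lintegral_mono_set hsub2) _
        _ = ∫⁻ x in S₂, ENNReal.ofReal (u (x + y) ^ 2) * ENNReal.ofReal (g y) :=
            (lintegral_mul_const' _ _ ENNReal.ofReal_ne_top).symm
        _ = ∫⁻ x in S₂, ENNReal.ofReal (u (x + y) ^ 2 * g y) := by
            simp_rw [ENNReal.ofReal_mul (sq_nonneg _)]
    calc ENNReal.ofReal I₁ * ENNReal.ofReal κ
        ≤ ENNReal.ofReal I₁ * ∫⁻ y in S₁, ENNReal.ofReal (g y) :=
          mul_le_mul_right hgauss_low _
      _ = ∫⁻ y in S₁, ENNReal.ofReal I₁ * ENNReal.ofReal (g y) :=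
          (lintegral_const_mul' _ _ ENNReal.ofReal_ne_top).symm
      _ ≤ ∫⁻ y in S₁, ∫⁻ x in S₂, ENNReal.ofReal (u (x + y) ^ 2 * g y) :=
          setLIntegral_mono' measurableSet_ball hinner
      _ = ∫⁻ x in S₂, ∫⁻ y in S₁, ENNReal.ofReal (u (x + y) ^ 2 * g y) := hswap.symm
      _ ≤ _ := hA1
  -- combine everything in ℝ≥0∞, then come back to ℝ
  have hchain : ENNReal.ofReal (lam * (I₁ * κ))
      ≤ ENNReal.ofReal ((4 * π) ^ ((n : ℝ) / 2) * D) := by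
    calc ENNReal.ofReal (lam * (I₁ * κ))
        = ENNReal.ofReal lam * (ENNReal.ofReal I₁ * ENNReal.ofReal κ) := by
          rw [ENNReal.ofReal_mul hlam.le, ENNReal.ofReal_mul hI₁nn]
      _ ≤ ENNReal.ofReal lam
            * ∫⁻ x in S₂, ∫⁻ y, ENNReal.ofReal (u (x + y) ^ 2 * g y) :=
          mul_le_mul_right lower _
      _ ≤ ∫⁻ x in S₂, ∫⁻ y, ENNReal.ofReal (‖gradient u (x + y)‖ ^ 2 * g y) := step2
      _ ≤ _ := upper
  have hreal : lam * (I₁ * κ) ≤ (4 * π) ^ ((n : ℝ) / 2) * D := by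
    have h := (ENNReal.ofReal_le_ofReal_iff (by positivity)).1 hchain
    exact h
  -- final arithmetic
  have hI₁pos : 0 < I₁ := by nlinarith
  rw [le_div_iff₀ hSpos]
  have hG : (4 * π) ^ ((n : ℝ) / 2) = ((4 * π) ^ ((n : ℝ) / 2) / κ) * κ :=
    (div_mul_cancel₀ _ hκpos.ne').symm
  have h2 : lam * I₁ ≤ ((4 * π) ^ ((n : ℝ) / 2) / κ) * D := by
    rw [hG] at hreal
    have hκ' := hκpos
    nlinarith
  calc lam * S ≤ M * (lam * I₁) := by nlinarith
    _ ≤ M * (((4 * π) ^ ((n : ℝ) / 2) / κ) * D) :=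
        mul_le_mul_of_nonneg_left h2 (by linarith)
    _ = (4 * π) ^ ((n : ℝ) / 2) / κ * M * D := by ring
end
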